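/- Let λ : [0,∞) → ℝ be differentiable, non-increasing, positive, with monotone hazard rate, and suppose at some point x_e > 0 the stopping equality λ(x_e) − r = (1/e)(λ(0) − r) holds for a constant r with 0 ≤ r < λ(x_e). Then (λ(x_e) − r)/|λ'(x_e)| ≤ x_e. -/

import Mathlib

/-- Hazard-rate consequence of the stopping equality: if
λ(x_e) − r = (1/e)(λ(0) − r), then (λ(x_e) − r)/|λ'(x_e)| ≤ x_e. -/
theorem stopping_equality_hazard_bound (lam : ℝ → ℝ) (xe r : ℝ)
    (hxe : 0 < xe)
    (hcont : ContinuousOn lam (Set.Icc 0 xe))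
    (hdiff : ∀ x ∈ Set.Ioc (0:ℝ) xe, DifferentiableAt ℝ lam x)
    (hanti : ∀ x ∈ Set.Icc (0:ℝ) xe, ∀ y ∈ Set.Icc (0:ℝ) xe, x ≤ y → lam y ≤ lam x)
    (hpos : ∀ x ∈ Set.Icc (0:ℝ) xe, 0 < lam x)
    (hmhr : ∀ x ∈ Set.Ioc (0:ℝ) xe, ∀ y ∈ Set.Ioc (0:ℝ) xe, x ≤ y →
      |deriv lam x| / lam x ≤ |deriv lam y| / lam y)
    (hr0 : 0 ≤ r) (hrlt : r < lam xe)
    (hd : deriv lam xe ≠ 0)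
    (hstop : lam xe - r = (1/Real.exp 1) * (lam 0 - r)) :
    (lam xe - r) / |deriv lam xe| ≤ xe := by
  have e_pos := Real.exp_pos 1
  have hfxe : 0 < lam xe - r := sub_pos.mpr hrlt
  have hxeI : xe ∈ Set.Icc (0:ℝ) xe := ⟨hxe.le, le_refl _⟩
  have hfpos : ∀ x ∈ Set.Icc (0:ℝ) xe, 0 < lam x - r := by
    intro x hx
    have := hanti x hx xe hxeI hx.2
    linarith
  have hf0eq : lam 0 - r = Real.exp 1 * (lam xe - r) := by
    have h : Real.exp 1 * (lam xe - r)
        = Real.exp 1 * ((1/Real.exp 1) * (lam 0 - r)) := by rw [hstop]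
    field_simp at h
    linarith
  have hgcont : ContinuousOn (fun x => Real.log (lam x - r)) (Set.Icc 0 xe) :=
    (hcont.sub continuousOn_const).log (fun x hx => (hfpos x hx).ne')
  have hgderiv : ∀ x ∈ Set.Ioo (0:ℝ) xe,
      HasDerivAt (fun x => Real.log (lam x - r)) (deriv lam x / (lam x - r)) x := by
    intro x hx
    have hx' : x ∈ Set.Ioc (0:ℝ) xe := ⟨hx.1, hx.2.le⟩
    have hxI : x ∈ Set.Icc (0:ℝ) xe := ⟨hx.1.le, hx.2.le⟩
    have hdx : HasDerivAt (fun y => lam y - r) (deriv lam x) x :=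
      ((hdiff x hx').hasDerivAt).sub_const r
    exact hdx.log (hfpos x hxI).ne'
  obtain ⟨c, hc, hceq⟩ := exists_hasDerivAt_eq_slope (fun x => Real.log (lam x - r))
    (fun x => deriv lam x / (lam x - r)) hxe hgcont hgderiv
  have hcI : c ∈ Set.Icc (0:ℝ) xe := ⟨hc.1.le, hc.2.le⟩
  have hcIoc : c ∈ Set.Ioc (0:ℝ) xe := ⟨hc.1, hc.2.le⟩
  have hfc : 0 < lam c - r := hfpos c hcI
  have hlamc : 0 < lam c := hpos c hcI
  have hlamxe : 0 < lam xe := hpos xe hxeI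
  have hslope : deriv lam c / (lam c - r) = -(1 / xe) := by
    rw [hceq, hf0eq, Real.log_mul (Real.exp_ne_zero 1) hfxe.ne', Real.log_exp]
    field_simp
    rw [sub_zero, mul_div_assoc, div_self hxe.ne']
    ring
  have hdc : deriv lam c < 0 := by
    by_contra h
    push_neg at h
    have h1 : 0 ≤ deriv lam c / (lam c - r) := div_nonneg h hfc.le
    rw [hslope] at h1
    have h2 : 0 < 1/xe := by positivity
    linarith
  have hkey : 1/xe = |deriv lam c| / (lam c - r) := by
    rw [abs_of_neg hdc]
    field_simp
    field_simp at hslope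
    linarith
  have hmhr' := hmhr c hcIoc xe ⟨hxe, le_refl _⟩ hc.2.le
  have hlamle : lam xe ≤ lam c := hanti c hcI xe hxeI hc.2.le
  have hratio : lam c / (lam c - r) ≤ lam xe / (lam xe - r) := by
    rw [div_le_div_iff₀ hfc hfxe]
    nlinarith
  have hdxe : 0 < |deriv lam xe| := abs_pos.mpr hd
  have step : |deriv lam c| / (lam c - r) ≤ |deriv lam xe| / (lam xe - r) := by
    have h1 : |deriv lam c| / (lam c - r)
        = (|deriv lam c| / lam c) * (lam c / (lam c - r)) := by
      field_simp
    have h2 : |deriv lam xe| / (lam xe - r)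
        = (|deriv lam xe| / lam xe) * (lam xe / (lam xe - r)) := by
      field_simp
    rw [h1, h2]
    exact mul_le_mul hmhr' hratio (div_nonneg hlamc.le hfc.le)
      (div_nonneg (abs_nonneg _) hlamxe.le)
  have hfinal : 1/xe ≤ |deriv lam xe| / (lam xe - r) := hkey ▸ step
  rw [div_le_div_iff₀ hxe hfxe] at hfinal
  rw [div_le_iff₀ hdxe]
  linarith
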